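/- Let n ≥ 1. If K is a closed subgroup of GL_n(ℤ₂) whose image under the reduction map GL_n(ℤ₂) → GL_n(ℤ/8ℤ) is all of GL_n(ℤ/8ℤ), then K = GL_n(ℤ₂). (Lemma 2.2.1(a) for p = 2, instantiated at G = GL_n over ℤ₂.) -/

import Mathlib

open Filter Topology


/-- The reduction-mod-8 ring homomorphism `ℤ₂ →+* ℤ/8ℤ`. -/
noncomputable def toZMod8 : ℤ_[2] →+* ZMod 8 :=
  (ZMod.castHom (show (8 : ℕ) ∣ 2 ^ 3 by norm_num) (ZMod 8)).comp (PadicInt.toZModPow 3)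

lemma cong8 (a b : ℤ_[2]) (h : toZMod8 a = toZMod8 b) : ∃ c, a = b + (2:ℤ_[2])^3 * c := by
  have hinj : Function.Injective (ZMod.castHom (show (8 : ℕ) ∣ 2 ^ 3 by norm_num) (ZMod 8)) := by
    intro u v huv
    have h2 := RingHom.ext_zmod
      ((ZMod.castHom (show (2^3 : ℕ) ∣ 8 by norm_num) (ZMod (2^3))).comp
        (ZMod.castHom (show (8 : ℕ) ∣ 2 ^ 3 by norm_num) (ZMod 8))) (RingHom.id _)
    have hu := DFunLike.congr_fun h2 u
    have hv := DFunLike.congr_fun h2 v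
    simp only [RingHom.comp_apply, RingHom.id_apply] at hu hv
    rw [← hu, ← hv, huv]
  have h3 : PadicInt.toZModPow 3 a = PadicInt.toZModPow 3 b := hinj h
  have hker : a - b ∈ RingHom.ker (PadicInt.toZModPow (p := 2) 3) := by
    rw [RingHom.mem_ker, map_sub, h3, sub_self]
  rw [PadicInt.ker_toZModPow, Ideal.mem_span_singleton] at hker
  obtain ⟨c, hc⟩ := hker
  refine ⟨c, ?_⟩
  have h2 : ((2:ℕ):ℤ_[2]) = 2 := by norm_num
  rw [h2] at hc
  linear_combination hc

lemma key {R : Type*} [Ring R] [Algebra ℤ_[2] R] (q : ℤ_[2]) (C D : R) :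
    (1 + (4*q) • C + (8*q) • D) * (1 + (4*q) • C + (8*q) • D) =
      1 + (8*q) • C + (16*q) • (D + q • (C*C) + (2*q) • (C*D + D*C) + (4*q) • (D*D)) := by
  simp only [mul_add, add_mul, smul_mul_assoc, mul_smul_comm, smul_smul, smul_add,
    one_mul, mul_one]
  module

variable {n : ℕ}

lemma unit_one_add_two_smul (B : Matrix (Fin n) (Fin n) ℤ_[2]) :
    IsUnit (1 + (2:ℤ_[2]) • B) := by
  set φ := PadicInt.toZModPow (p := 2) 1 with hφ
  have hφ2 : φ (2:ℤ_[2]) = 0 := by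
    have h2 : (2:ℤ_[2]) = ((2:ℕ):ℤ_[2]) := by norm_num
    rw [h2, map_natCast]
    decide
  have hmap : (1 + (2:ℤ_[2]) • B).map φ = 1 := by
    ext i j
    by_cases h : i = j
    · subst h
      simp [Matrix.map_apply, Matrix.add_apply, Matrix.smul_apply, smul_eq_mul, map_add,
        map_mul, hφ2, Matrix.one_apply_eq]
    · simp [Matrix.map_apply, Matrix.add_apply, Matrix.smul_apply, smul_eq_mul, map_add,
        map_mul, hφ2, Matrix.one_apply_ne h]
  have hdet : φ ((1 + (2:ℤ_[2]) • B).det) = 1 := by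
    rw [RingHom.map_det]
    have : φ.mapMatrix (1 + (2:ℤ_[2]) • B) = 1 := hmap
    rw [this, Matrix.det_one]
  have hker : (1 + (2:ℤ_[2]) • B).det ∉ RingHom.ker φ := by
    rw [RingHom.mem_ker, hdet]
    intro h
    exact absurd h (by decide)
  have hmax : (1 + (2:ℤ_[2]) • B).det ∉ IsLocalRing.maximalIdeal ℤ_[2] := by
    rwa [PadicInt.maximalIdeal_eq_span_p, ← pow_one ((2:ℕ):ℤ_[2]), ← PadicInt.ker_toZModPow]
  have hu : IsUnit (1 + (2:ℤ_[2]) • B).det := by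
    by_contra hnu
    exact hmax (IsLocalRing.mem_maximalIdeal _ |>.mpr hnu)
  exact (Matrix.isUnit_iff_isUnit_det _).mpr hu

lemma tendsto_of_pow_dvd (f : ℕ → Matrix (Fin n) (Fin n) ℤ_[2]) (y : Matrix (Fin n) (Fin n) ℤ_[2])
    (h : ∀ m, ∃ B, y - f m = ((2:ℤ_[2])^m) • B) :
    Tendsto f atTop (𝓝 y) := by
  refine tendsto_pi_nhds.mpr ?_
  intro i
  rw [tendsto_pi_nhds]
  intro j
  rw [tendsto_iff_norm_sub_tendsto_zero]
  apply squeeze_zero (fun m => norm_nonneg _) (g := fun m => (2⁻¹ : ℝ)^m)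
  · intro m
    obtain ⟨B, hB⟩ := h m
    have heq : f m i j - y i j = -((2:ℤ_[2])^m * B i j) := by
      have := congrFun (congrFun hB i) j
      simp only [Matrix.sub_apply, Matrix.smul_apply, smul_eq_mul] at this
      linear_combination -this
    rw [heq, norm_neg, norm_mul, norm_pow]
    have h2 : ‖(2:ℤ_[2])‖ = (2⁻¹:ℝ) := by
      have h2' : (2:ℤ_[2]) = ((2:ℕ):ℤ_[2]) := by norm_num
      rw [h2', PadicInt.norm_p]; norm_num
    rw [h2]
    calc (2⁻¹:ℝ)^m * ‖B i j‖ ≤ (2⁻¹:ℝ)^m * 1 :=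
          mul_le_mul_of_nonneg_left (PadicInt.norm_le_one _) (by positivity)
      _ = (2⁻¹:ℝ)^m := mul_one _
  · exact tendsto_pow_atTop_nhds_zero_of_lt_one (by norm_num) (by norm_num)

/-- Let `n ≥ 1`. If `K` is a closed subgroup of `GL n ℤ₂` whose image under
the reduction map `GL n ℤ₂ → GL n (ℤ/8ℤ)` is all of `GL n (ℤ/8ℤ)`, then `K = GL n ℤ₂`. -/
theorem stmt1 (n : ℕ) (hn : 1 ≤ n)
    (K : Subgroup (GL (Fin n) ℤ_[2]))
    (hclosed : IsClosed (K : Set (GL (Fin n) ℤ_[2])))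
    (hsurj : ∀ g : GL (Fin n) (ZMod 8),
      ∃ k ∈ K, Matrix.GeneralLinearGroup.map toZMod8 k = g) :
    K = ⊤ := by
  have main : ∀ (s : ℕ) (x : GL (Fin n) ℤ_[2]), ∃ k ∈ K, ∃ C : Matrix (Fin n) (Fin n) ℤ_[2],
      (x : Matrix (Fin n) (Fin n) ℤ_[2]) = ↑k + ((2:ℤ_[2])^(s+3)) • C := by
    intro s
    induction s with
    | zero =>
      intro x
      obtain ⟨k, hkK, hk⟩ := hsurj (Matrix.GeneralLinearGroup.map toZMod8 x)
      have hent : ∀ i j, ∃ c, (x : Matrix (Fin n) (Fin n) ℤ_[2]) i j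
          = (k : Matrix (Fin n) (Fin n) ℤ_[2]) i j + (2:ℤ_[2])^3 * c := by
        intro i j
        apply cong8
        have h1 := Matrix.GeneralLinearGroup.map_apply toZMod8 i j k
        have h2 := Matrix.GeneralLinearGroup.map_apply toZMod8 i j x
        rw [← h1, ← h2, hk]
      choose C hC using hent
      refine ⟨k, hkK, Matrix.of C, ?_⟩
      ext i j
      simp only [Matrix.add_apply, Matrix.smul_apply, smul_eq_mul, Matrix.of_apply]
      exact hC i j
    | succ s ih =>
      intro x
      obtain ⟨k₀, hk₀K, C₀, hC₀⟩ := ih x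
      set q : ℤ_[2] := 2^s with hq
      have h8 : (2:ℤ_[2])^(s+3) = 8*q := by rw [hq]; ring
      have h16 : (2:ℤ_[2])^(s+1+3) = 16*q := by rw [hq]; ring
      set Cm : Matrix (Fin n) (Fin n) ℤ_[2] := C₀ * (↑k₀⁻¹ : Matrix (Fin n) (Fin n) ℤ_[2])
        with hCmdef
      have hYu : IsUnit (1 + (4*q) • Cm) := by
        have hu := unit_one_add_two_smul ((2*q) • Cm)
        rwa [smul_smul, show (2:ℤ_[2]) * (2*q) = 4*q by ring] at hu
      obtain ⟨k₁, hk₁K, D₀, hD₀⟩ := ih (show GL (Fin n) ℤ_[2] from hYu.unit)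
      have hk₁ : (k₁ : Matrix (Fin n) (Fin n) ℤ_[2]) = 1 + (4*q) • Cm + (8*q) • (-D₀) := by
        have hspec : ((hYu.unit : (Matrix (Fin n) (Fin n) ℤ_[2])ˣ) :
            Matrix (Fin n) (Fin n) ℤ_[2]) = 1 + (4*q) • Cm := hYu.unit_spec
        rw [hspec, h8] at hD₀
        have := eq_sub_of_add_eq hD₀.symm
        rw [this, smul_neg, sub_eq_add_neg]
      have hkey := key q Cm (-D₀)
      set E := (-D₀) + q • (Cm*Cm) + (2*q) • (Cm*(-D₀) + (-D₀)*Cm) + (4*q) • ((-D₀)*(-D₀))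
        with hE
      refine ⟨k₁*k₁*k₀, mul_mem (mul_mem hk₁K hk₁K) hk₀K, -(E * Units.val k₀), ?_⟩
      have hCk : Cm * Units.val k₀ = C₀ := by
        rw [hCmdef, Matrix.mul_assoc]
        rw [show (Units.val k₀⁻¹ * Units.val k₀ : Matrix (Fin n) (Fin n) ℤ_[2]) = 1
          from Units.inv_mul k₀, Matrix.mul_one]
      have hmul : (Units.val k₁ * Units.val k₁ : Matrix (Fin n) (Fin n) ℤ_[2])
          = 1 + (8*q) • Cm + (16*q) • E := by
        show (k₁ : Matrix (Fin n) (Fin n) ℤ_[2]) * (k₁ : Matrix (Fin n) (Fin n) ℤ_[2]) = _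
        rw [hk₁]; exact hkey
      have hfull : (Units.val k₁ * Units.val k₁ * Units.val k₀ : Matrix (Fin n) (Fin n) ℤ_[2])
          = Units.val k₀ + (8*q) • C₀ + (16*q) • (E * Units.val k₀) := by
        rw [hmul, Matrix.add_mul, Matrix.add_mul, Matrix.one_mul, smul_mul_assoc,
          smul_mul_assoc, hCk]
      have hcoe : ((k₁*k₁*k₀ : GL (Fin n) ℤ_[2]) : Matrix (Fin n) (Fin n) ℤ_[2])
          = Units.val k₁ * Units.val k₁ * Units.val k₀ := rfl
      rw [hcoe, hfull, hC₀, h8, h16, smul_neg]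
      abel
  rw [eq_top_iff]
  intro x _
  choose k hkK C hC using fun m => main m x
  have hval : Tendsto (fun m => ((k m : GL (Fin n) ℤ_[2]) : Matrix (Fin n) (Fin n) ℤ_[2]))
      atTop (𝓝 ↑x) := by
    apply tendsto_of_pow_dvd
    intro m
    refine ⟨(8:ℤ_[2]) • C m, ?_⟩
    rw [hC m, add_sub_cancel_left, smul_smul]
    congr 1
    ring
  have hinv : Tendsto (fun m => (Units.val (k m)⁻¹ : Matrix (Fin n) (Fin n) ℤ_[2]))
      atTop (𝓝 (Units.val x⁻¹)) := by
    apply tendsto_of_pow_dvd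
    intro m
    refine ⟨-((8:ℤ_[2]) • ((Units.val x⁻¹ : Matrix (Fin n) (Fin n) ℤ_[2]) * C m
      * Units.val (k m)⁻¹)), ?_⟩
    have h1 : (Units.val (k m) * Units.val (k m)⁻¹ : Matrix (Fin n) (Fin n) ℤ_[2]) = 1 :=
      Units.mul_inv (k m)
    have h2 : (Units.val x⁻¹ * Units.val x : Matrix (Fin n) (Fin n) ℤ_[2]) = 1 :=
      Units.inv_mul x
    have hsub : (Units.val x⁻¹ - Units.val (k m)⁻¹ : Matrix (Fin n) (Fin n) ℤ_[2])
        = Units.val x⁻¹ * (Units.val (k m) - Units.val x) * Units.val (k m)⁻¹ := by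
      rw [Matrix.mul_sub, h2, Matrix.sub_mul, Matrix.mul_assoc, h1, Matrix.mul_one,
        Matrix.one_mul]
    rw [hsub]
    have hkm : (Units.val (k m) - Units.val x : Matrix (Fin n) (Fin n) ℤ_[2])
        = -(((2:ℤ_[2])^(m+3)) • C m) := by
      have := hC m
      rw [show ((x : GL (Fin n) ℤ_[2]) : Matrix (Fin n) (Fin n) ℤ_[2]) = Units.val x from rfl,
        show ((k m : GL (Fin n) ℤ_[2]) : Matrix (Fin n) (Fin n) ℤ_[2]) = Units.val (k m)
          from rfl] at this
      rw [this]; abel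
    rw [hkm, Matrix.mul_neg, Matrix.neg_mul, mul_smul_comm, smul_mul_assoc, smul_neg,
      smul_smul, show (2:ℤ_[2])^(m+3) = 2^m*8 by ring]
  have htend : Tendsto k atTop (𝓝 x) := by
    rw [(Units.isEmbedding_embedProduct
      (M := Matrix (Fin n) (Fin n) ℤ_[2])).tendsto_nhds_iff]
    have : Tendsto (fun m => ((Units.val (k m) : Matrix (Fin n) (Fin n) ℤ_[2]),
        MulOpposite.op (Units.val (k m)⁻¹))) atTop
        (𝓝 ((Units.val x : Matrix (Fin n) (Fin n) ℤ_[2]), MulOpposite.op (Units.val x⁻¹))) :=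
      hval.prodMk_nhds ((MulOpposite.continuous_op.tendsto _).comp hinv)
    exact this
  exact hclosed.mem_of_tendsto htend (Filter.Eventually.of_forall hkK)
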